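/- arXiv:1610.09795 — 3 statements merged into one kernel-verified Lean document; each statement's English description precedes it below -/
import Mathlib

section
/- Let D be a canonical DBM over n clocks. Then the delay (time-elapse) matrix D↑ is again canonical, i.e. D↑ satisfies the triangle inequality ∀ i j k, D↑ i j ≤ D↑ i k + D↑ k j. -/
/-- A DBM over `n` clocks: index `0` is the reference clock. -/
abbrev DBM (n : ℕ) := Fin (n + 1) → Fin (n + 1) → WithTop ℝ

/-- A DBM is canonical if it satisfies the triangle inequality. -/
def Canonical {n : ℕ} (D : DBM n) : Prop :=
  ∀ i j k, D i j ≤ D i k + D k j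

/-- The delay (time-elapse) matrix `D↑`: entries `(i, 0)` for `i ≠ 0` become `⊤`,
all other entries are unchanged. -/
def delay {n : ℕ} (D : DBM n) : DBM n :=
  fun i j => if i ≠ 0 ∧ j = 0 then ⊤ else D i j

/-- if `D` is canonical, then the delay matrix `D↑` is again canonical. -/
theorem delay_preserves_canonical {n : ℕ} (D : DBM n) (hD : Canonical D) :
    Canonical (delay D) := by
  have hle : ∀ i j, D i j ≤ delay D i j := by
    intro i j
    unfold delay
    split
    · exact le_top
    · exact le_rfl
  intro i j k
  by_cases h : i ≠ 0 ∧ j = 0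
  · rcases h with ⟨hi, hj⟩
    by_cases hk : k = 0
    · have : delay D i k = ⊤ := by simp [delay, hi, hk]
      simp [this]
    · have : delay D k j = ⊤ := by simp [delay, hk, hj]
      simp [this]
  · have : delay D i j = D i j := by simp [delay, h]
    rw [this]
    exact le_trans (hD i j k) (add_le_add (hle i k) (hle k j))
end

section
/- Let D be a DBM over n clocks such that every cyclic path in D (a path with p₀ = p_m and m ≥ 1) has weight ≥ 0. Then Canon(D) is canonical, i.e. Canon(D) i j ≤ Canon(D) i k + Canon(D) k j for all i, j, k. -/
/-- Weight of the path `p 0, p 1, …, p m` in `D`, computed in `WithTop ℝ`. -/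
def pathWeight {n : ℕ} (D : DBM n) (p : ℕ → Fin (n + 1)) (m : ℕ) : WithTop ℝ :=
  ∑ k ∈ Finset.range m, D (p k) (p (k + 1))

/-- Canonicalization: `Canon D i j` is the minimum weight over all paths from `i` to `j`
with at most `n + 1` edges (the minimum of a finite nonempty set in `WithTop ℝ`). -/
noncomputable def Canon {n : ℕ} (D : DBM n) : DBM n := fun i j =>
  sInf {w | ∃ m p, 1 ≤ m ∧ m ≤ n + 1 ∧ p 0 = i ∧ p m = j ∧ w = pathWeight D p m}

namespace CanonAux

variable {n : ℕ}

/-- The set of weights of short paths from `i` to `j`. -/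
def S (D : DBM n) (i j : Fin (n + 1)) : Set (WithTop ℝ) :=
  {w | ∃ m p, 1 ≤ m ∧ m ≤ n + 1 ∧ p 0 = i ∧ p m = j ∧ w = pathWeight D p m}

lemma canon_eq (D : DBM n) (i j : Fin (n + 1)) : Canon D i j = sInf (S D i j) := rfl

lemma pw_congr {D : DBM n} {p q : ℕ → Fin (n + 1)} {m : ℕ}
    (h : ∀ t ≤ m, p t = q t) : pathWeight D p m = pathWeight D q m := by
  unfold pathWeight
  refine Finset.sum_congr rfl fun k hk => ?_
  rw [Finset.mem_range] at hk
  rw [h k (by omega), h (k + 1) (by omega)]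

lemma pw_add (D : DBM n) (p : ℕ → Fin (n + 1)) (a b : ℕ) :
    pathWeight D p (a + b) = pathWeight D p a + pathWeight D (fun t => p (a + t)) b :=
  Finset.sum_range_add _ a b

lemma S_nonempty (D : DBM n) (i j : Fin (n + 1)) : (S D i j).Nonempty := by
  refine ⟨pathWeight D (fun t => if t = 0 then i else j) 1,
    1, fun t => if t = 0 then i else j, le_refl _, by omega, by simp, by simp, rfl⟩

lemma S_finite (D : DBM n) (i j : Fin (n + 1)) : (S D i j).Finite := by
  have : S D i j ⊆ Set.range (fun q : Fin (n + 1) × (Fin (n + 2) → Fin (n + 1)) =>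
      pathWeight D (fun k => q.2 ⟨min k (n + 1), by omega⟩) (q.1.val + 1)) := by
    rintro w ⟨m, p, hm1, hm2, _, _, rfl⟩
    refine ⟨⟨⟨m - 1, by omega⟩, fun t => p t.val⟩, ?_⟩
    simp only
    have hmm : m - 1 + 1 = m := by omega
    rw [hmm]
    refine (pw_congr fun t ht => ?_).symm
    have : min t (n + 1) = t := by omega
    simp [this]
  exact (Set.finite_range _).subset this

lemma canon_mem (D : DBM n) (i j : Fin (n + 1)) : Canon D i j ∈ S D i j := by
  obtain ⟨a, ha, hmin⟩ := Set.exists_min_image (S D i j) id (S_finite D i j) (S_nonempty D i j)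
  have : sInf (S D i j) = a := le_antisymm
    (csInf_le (S_finite D i j).bddBelow ha)
    (le_csInf (S_nonempty D i j) hmin)
  rw [canon_eq, this]; exact ha

lemma canon_le (D : DBM n) {i j : Fin (n + 1)} {w : WithTop ℝ} (hw : w ∈ S D i j) :
    Canon D i j ≤ w :=
  csInf_le (S_finite D i j).bddBelow hw

/-- Key shortening lemma: every path has a short path with smaller weight. -/
lemma shorten (D : DBM n)
    (hcyc : ∀ (m : ℕ) (p : ℕ → Fin (n + 1)), 1 ≤ m → p 0 = p m →
      (0 : WithTop ℝ) ≤ pathWeight D p m) :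
    ∀ (m : ℕ) (p : ℕ → Fin (n + 1)), 1 ≤ m →
      ∃ w ∈ S D (p 0) (p m), w ≤ pathWeight D p m := by
  intro m
  induction m using Nat.strong_induction_on with
  | _ m ih =>
    intro p hm
    by_cases hle : m ≤ n + 1
    · exact ⟨pathWeight D p m, ⟨m, p, hm, hle, rfl, rfl, rfl⟩, le_refl _⟩
    · -- pigeonhole: two equal points among p 0, ..., p (n+1)
      obtain ⟨x, y, hxy, hpq⟩ := Fintype.exists_ne_map_eq_of_card_lt
        (fun t : Fin (n + 2) => p t.val) (by simp)
      -- wlog x < y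
      obtain ⟨a, b, hab, hpab⟩ : ∃ a b : ℕ, a < b ∧ b ≤ n + 1 ∧ p a = p b := by
        rcases lt_or_gt_of_ne hxy with h | h
        · exact ⟨x.val, y.val, h, by omega, hpq⟩
        · exact ⟨y.val, x.val, h, by omega, hpq.symm⟩
      obtain ⟨hb, hpab⟩ := hpab
      set d := b - a with hd
      set c := m - b with hc
      have hd1 : 1 ≤ d := by omega
      have hc1 : 1 ≤ c := by omega
      have hmeq : m = a + (d + c) := by omega
      have hbeq : b = a + d := by omega
      -- the shortened path
      set q : ℕ → Fin (n + 1) := fun t => if t ≤ a then p t else p (t + d) with hq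
      have hq0 : q 0 = p 0 := by simp [hq]
      have hqshift : ∀ t, q (a + t) = p (a + d + t) := by
        intro t
        rcases Nat.eq_zero_or_pos t with rfl | ht
        · simp [hq, hpab, hbeq]
        · have h1 : ¬ a + t ≤ a := by omega
          simp only [hq, if_neg h1]
          congr 1; omega
      have hqend : q (a + c) = p m := by
        rw [hqshift]; congr 1; omega
      -- weight comparison
      have hw1 : pathWeight D p m =
          pathWeight D p a + (pathWeight D (fun t => p (a + t)) d +
            pathWeight D (fun t => p (a + (d + t))) c) := by
        rw [hmeq, pw_add, pw_add]
      have hw2 : pathWeight D q (a + c) =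
          pathWeight D p a + pathWeight D (fun t => p (a + (d + t))) c := by
        rw [pw_add]
        congr 1
        · exact pw_congr fun t ht => by simp [hq, ht]
        · exact pw_congr fun t ht => by rw [hqshift]; congr 1; omega
      have hcyc0 : (0 : WithTop ℝ) ≤ pathWeight D (fun t => p (a + t)) d := by
        refine hcyc d (fun t => p (a + t)) hd1 ?_
        show p (a + 0) = p (a + d)
        rw [show a + 0 = a by omega, show a + d = b by omega, hpab]
      have hle2 : pathWeight D q (a + c) ≤ pathWeight D p m := by
        rw [hw1, hw2]
        refine add_le_add le_rfl ?_
        calc pathWeight D (fun t => p (a + (d + t))) c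
            = 0 + pathWeight D (fun t => p (a + (d + t))) c := (zero_add _).symm
          _ ≤ _ := add_le_add hcyc0 le_rfl
      obtain ⟨w, hwS, hwle⟩ := ih (a + c) (by omega) q (by omega)
      rw [hq0, hqend] at hwS
      exact ⟨w, hwS, le_trans hwle hle2⟩

end CanonAux

/-- if every cyclic path of `D` has nonnegative weight, then `Canon D`
satisfies the triangle inequality, i.e. it is canonical. -/
theorem canon_canonical_of_no_negative_cycle {n : ℕ} (D : DBM n)
    (hcyc : ∀ (m : ℕ) (p : ℕ → Fin (n + 1)), 1 ≤ m → p 0 = p m →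
      (0 : WithTop ℝ) ≤ pathWeight D p m) :
    Canonical (Canon D) := by
  intro i j k
  obtain ⟨m₁, p₁, hm₁, _, hp₁0, hp₁m, hw₁⟩ := CanonAux.canon_mem D i k
  obtain ⟨m₂, p₂, hm₂, _, hp₂0, hp₂m, hw₂⟩ := CanonAux.canon_mem D k j
  -- concatenated path
  set q : ℕ → Fin (n + 1) := fun t => if t < m₁ then p₁ t else p₂ (t - m₁) with hq
  have hq1 : ∀ t ≤ m₁, q t = p₁ t := by
    intro t ht
    rcases Nat.lt_or_ge t m₁ with h | h
    · simp [hq, h]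
    · have : t = m₁ := by omega
      subst this
      simp [hq, hp₂0, hp₁m]
  have hq2 : ∀ t, q (m₁ + t) = p₂ t := by
    intro t
    have h1 : ¬ m₁ + t < m₁ := by omega
    simp only [hq, if_neg h1]
    congr 1; omega
  have hq0 : q 0 = i := by rw [hq1 0 (by omega), hp₁0]
  have hqend : q (m₁ + m₂) = j := by rw [hq2, hp₂m]
  have hw : pathWeight D q (m₁ + m₂) = Canon D i k + Canon D k j := by
    rw [CanonAux.pw_add, hw₁, hw₂]
    congr 1
    · exact CanonAux.pw_congr hq1
    · exact CanonAux.pw_congr fun t _ => hq2 t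
  obtain ⟨w, hwS, hwle⟩ := CanonAux.shorten D hcyc (m₁ + m₂) q (by omega)
  rw [hq0, hqend] at hwS
  calc Canon D i j ≤ w := CanonAux.canon_le D hwS
    _ ≤ pathWeight D q (m₁ + m₂) := hwle
    _ = Canon D i k + Canon D k j := hw
end

section
/- Let D be a canonical DBM over n clocks, let D' be any DBM with D i j ≤ D' i j for all i, j (for instance a partial extrapolation of D), and suppose that for fixed indices a, b the entry is untouched: D' a b = D a b. Then re-canonicalizing D' leaves that entry unchanged: Canon(D') a b = D a b. -/
lemma canonical_le_pathWeight {n : ℕ} (D : DBM n) (hD : Canonical D)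
    (p : ℕ → Fin (n + 1)) : ∀ m, 1 ≤ m → D (p 0) (p m) ≤ pathWeight D p m := by
  intro m
  induction m with
  | zero => omega
  | succ m ih =>
    intro _
    rcases Nat.eq_or_lt_of_le (Nat.one_le_iff_ne_zero.mpr (Nat.succ_ne_zero m)) with h | h
    · obtain rfl : m = 0 := by omega
      simp [pathWeight]
    · have hm : 1 ≤ m := by omega
      have : pathWeight D p (m + 1) = pathWeight D p m + D (p m) (p (m + 1)) := by
        simp [pathWeight, Finset.sum_range_succ]
      rw [this]
      calc D (p 0) (p (m + 1)) ≤ D (p 0) (p m) + D (p m) (p (m + 1)) := hD _ _ _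
        _ ≤ pathWeight D p m + D (p m) (p (m + 1)) := add_le_add_left (ih hm) _

/-- if `D` is canonical, `D'` dominates `D` entrywise, and the entry
`(a, b)` is untouched (`D' a b = D a b`), then re-canonicalizing `D'` leaves that entry
unchanged: `Canon D' a b = D a b`. -/
theorem canon_untouched_entry {n : ℕ} (D D' : DBM n) (hD : Canonical D)
    (hle : ∀ i j, D i j ≤ D' i j) (a b : Fin (n + 1)) (hab : D' a b = D a b) :
    Canon D' a b = D a b := by
  apply le_antisymm
  · apply csInf_le
    · exact ⟨D a b, fun w hw => by
        obtain ⟨m, p, hm1, _, hp0, hpm, rfl⟩ := hw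
        have h1 : pathWeight D p m ≤ pathWeight D' p m :=
          Finset.sum_le_sum fun k _ => hle _ _
        have h2 := canonical_le_pathWeight D hD p m hm1
        rw [hp0, hpm] at h2
        exact h2.trans h1⟩
    · exact ⟨1, fun k => if k = 0 then a else b, le_refl 1, by omega, by simp, by simp, by
        simp [pathWeight, hab]⟩
  · apply le_csInf
    · exact ⟨_, 1, fun k => if k = 0 then a else b, le_refl 1, by omega, by simp, by simp, rfl⟩
    · intro w hw
      obtain ⟨m, p, hm1, _, hp0, hpm, rfl⟩ := hw
      have h1 : pathWeight D p m ≤ pathWeight D' p m :=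
        Finset.sum_le_sum fun k _ => hle _ _
      have h2 := canonical_le_pathWeight D hD p m hm1
      rw [hp0, hpm] at h2
      exact h2.trans h1
end
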